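/- Let ρ₁ be the MCP with γ = λ = 1 and α > 1. If 1 < x < √α, then u = 0 is the unique global minimizer of h(u) = ρ₁(u) + (1/(2α))(u − x)², while if √α < x ≤ α, then u = x is the unique global minimizer; and if x = √α > 1 the set of minimizers is exactly {0, √α}. -/

import Mathlib

/-- The MCP penalty with γ = λ = 1. -/
noncomputable def rho1 (u : ℝ) : ℝ := if |u| < 1 then |u| - u ^ 2 / 2 else 1 / 2

lemma rho1_zero : rho1 0 = 0 := by simp [rho1]

lemma rho1_of_one_le (u : ℝ) (h : 1 ≤ |u|) : rho1 u = 1 / 2 := by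
  simp [rho1, not_lt.2 h]

lemma rho1_of_lt (u : ℝ) (h : |u| < 1) : rho1 u = |u| - u ^ 2 / 2 := by
  simp [rho1, h]

lemma rho1_key (α x u : ℝ) (hα : 1 < α) (hx1 : 1 < x) (hxα : x ≤ α)
    (hu0 : u ≠ 0) (hux : u ≠ x) :
    min (x ^ 2 / (2 * α)) (1 / 2) < rho1 u + (1 / (2 * α)) * (u - x) ^ 2 := by
  have hα0 : (0 : ℝ) < α := by linarith
  have h2α : (0 : ℝ) < 2 * α := by linarith
  have hm1 : 2 * α * min (x ^ 2 / (2 * α)) (1 / 2) ≤ x ^ 2 := by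
    have h1 : min (x ^ 2 / (2 * α)) (1 / 2) ≤ x ^ 2 / (2 * α) := min_le_left _ _
    calc 2 * α * min (x ^ 2 / (2 * α)) (1 / 2)
        ≤ 2 * α * (x ^ 2 / (2 * α)) := by
          exact mul_le_mul_of_nonneg_left h1 h2α.le
      _ = x ^ 2 := by field_simp
  have hm2 : 2 * α * min (x ^ 2 / (2 * α)) (1 / 2) ≤ α := by
    have h1 : min (x ^ 2 / (2 * α)) (1 / 2) ≤ 1 / 2 := min_le_right _ _
    calc 2 * α * min (x ^ 2 / (2 * α)) (1 / 2)
        ≤ 2 * α * (1 / 2) := mul_le_mul_of_nonneg_left h1 h2α.le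
      _ = α := by ring
  rcases lt_or_ge |u| 1 with h | h
  · rw [rho1_of_lt u h]
    have hlt := abs_lt.1 h
    rcases lt_or_gt_of_ne hu0 with hneg | hpos
    · rw [abs_of_neg hneg,
        show -u - u ^ 2 / 2 + 1 / (2 * α) * (u - x) ^ 2
          = (-2 * α * u - α * u ^ 2 + (u - x) ^ 2) / (2 * α) by field_simp,
        lt_div_iff₀ h2α]
      nlinarith [mul_pos (show (0:ℝ) < -(u ^ 2 + u) by nlinarith) (show (0:ℝ) < α - 1 by linarith),
        mul_pos (show (0:ℝ) < -u by linarith) (show (0:ℝ) < x by linarith),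
        mul_pos (show (0:ℝ) < -u by linarith) hα0]
    · rw [abs_of_pos hpos,
        show u - u ^ 2 / 2 + 1 / (2 * α) * (u - x) ^ 2
          = (2 * α * u - α * u ^ 2 + (u - x) ^ 2) / (2 * α) by field_simp,
        lt_div_iff₀ h2α]
      nlinarith [mul_pos hpos (show (0:ℝ) < 1 - u by linarith),
        sq_nonneg (x - 1),
        mul_pos (mul_pos hpos (show (0:ℝ) < 1 - u by linarith))
          (show (0:ℝ) < α - 1 by linarith),
        mul_nonneg hpos.le (sq_nonneg (x - 1))]
  · rw [rho1_of_one_le u h]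
    have hsq : (0 : ℝ) < (u - x) ^ 2 := by
      have : u - x ≠ 0 := sub_ne_zero.2 hux
      positivity
    have h2 : min (x ^ 2 / (2 * α)) (1 / 2) ≤ 1 / 2 := min_le_right _ _
    have : (0 : ℝ) < 1 / (2 * α) * (u - x) ^ 2 := by positivity
    linarith

/-- For α > 1 and 1 < x ≤ α: if x < √α the unique global minimizer of
h(u) = ρ₁(u) + (1/(2α))(u − x)² is 0; if x > √α it is x; and if x = √α the set
of minimizers is exactly {0, √α}. -/
theorem prox_rho1_two_minima_case (α x : ℝ) (hα : 1 < α) (hx1 : 1 < x)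
    (hxα : x ≤ α) :
    (x < Real.sqrt α →
      ∀ u : ℝ, u ≠ 0 →
        rho1 0 + (1 / (2 * α)) * (0 - x) ^ 2
          < rho1 u + (1 / (2 * α)) * (u - x) ^ 2) ∧
    (Real.sqrt α < x →
      ∀ u : ℝ, u ≠ x →
        rho1 x + (1 / (2 * α)) * (x - x) ^ 2
          < rho1 u + (1 / (2 * α)) * (u - x) ^ 2) ∧
    (x = Real.sqrt α →
      {u : ℝ | ∀ v : ℝ,
          rho1 u + (1 / (2 * α)) * (u - x) ^ 2
            ≤ rho1 v + (1 / (2 * α)) * (v - x) ^ 2}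
        = {0, Real.sqrt α}) := by
  have hα0 : (0 : ℝ) < α := by linarith
  have hx0 : (0 : ℝ) < x := by linarith
  have hxabs : 1 ≤ |x| := by rw [abs_of_pos hx0]; linarith
  have h0 : rho1 0 + (1 / (2 * α)) * (0 - x) ^ 2 = x ^ 2 / (2 * α) := by
    rw [rho1_zero]; ring
  have hxval : rho1 x + (1 / (2 * α)) * (x - x) ^ 2 = 1 / 2 := by
    rw [rho1_of_one_le x hxabs]; ring
  refine ⟨?_, ?_, ?_⟩
  · intro hlt u hu0
    have hx2 : x ^ 2 < α := by
      have := Real.sq_sqrt hα0.le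
      nlinarith [Real.sqrt_nonneg α]
    have hmin : x ^ 2 / (2 * α) < 1 / 2 := by
      rw [div_lt_iff₀ (by linarith : (0:ℝ) < 2 * α)]; linarith
    rw [h0]
    rcases eq_or_ne u x with rfl | hux
    · rw [hxval]; exact hmin
    · have hk := rho1_key α x u hα hx1 hxα hu0 hux
      have hmineq : min (x ^ 2 / (2 * α)) (1 / 2) = x ^ 2 / (2 * α) :=
        min_eq_left hmin.le
      rw [hmineq] at hk
      exact hk
  · intro hlt u hux
    have hx2 : α < x ^ 2 := by
      have h1 := Real.sq_sqrt hα0.le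
      nlinarith [Real.sqrt_nonneg α]
    have hmin : 1 / 2 < x ^ 2 / (2 * α) := by
      rw [lt_div_iff₀ (by linarith : (0:ℝ) < 2 * α)]; linarith
    rw [hxval]
    rcases eq_or_ne u 0 with rfl | hu0
    · rw [h0]; linarith
    · have hk := rho1_key α x u hα hx1 hxα hu0 hux
      have hmineq : min (x ^ 2 / (2 * α)) (1 / 2) = 1 / 2 :=
        min_eq_right hmin.le
      rw [hmineq] at hk
      exact hk
  · intro heq
    have hx2 : x ^ 2 = α := by
      rw [heq]; exact Real.sq_sqrt hα0.le
    have hdiv : x ^ 2 / (2 * α) = 1 / 2 := by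
      rw [hx2, div_eq_iff (by linarith : (2 * α) ≠ 0)]; ring
    have h0' : rho1 0 + (1 / (2 * α)) * (0 - x) ^ 2 = 1 / 2 := by
      rw [h0, hdiv]
    have hmineq : min (x ^ 2 / (2 * α)) (1 / 2) = 1 / 2 := by
      rw [hdiv, min_self]
    have hge : ∀ v : ℝ, (1 : ℝ) / 2 ≤ rho1 v + (1 / (2 * α)) * (v - x) ^ 2 := by
      intro v
      rcases eq_or_ne v 0 with rfl | hv0
      · rw [h0']
      rcases eq_or_ne v x with rfl | hvx
      · rw [hxval]
      have hk := rho1_key α x v hα hx1 hxα hv0 hvx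
      rw [hmineq] at hk
      exact hk.le
    ext u
    simp only [Set.mem_setOf_eq, Set.mem_insert_iff, Set.mem_singleton_iff]
    constructor
    · intro hu
      by_contra hcon
      push_neg at hcon
      obtain ⟨hu0, hux⟩ := hcon
      have hux' : u ≠ x := by rw [heq]; exact hux
      have hk := rho1_key α x u hα hx1 hxα hu0 hux'
      rw [hmineq] at hk
      have := hu 0
      rw [h0'] at this
      linarith
    · intro hu
      rcases hu with rfl | rfl
      · intro v; rw [h0']; exact hge v
      · intro v
        have hux : rho1 (Real.sqrt α) + 1 / (2 * α) * (Real.sqrt α - x) ^ 2 = 1 / 2 := by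
          rw [← heq]; exact hxval
        rw [hux]; exact hge v
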